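/- Suppose W ≥ 2. Then the maximum entry of the random demodulator matrix satisfies the tail bound P( max_{r,ω} |Φ_{r,ω}| > √(10·log W / R) ) ≤ 1/W. -/

import Mathlib

open MeasureTheory ProbabilityTheory Matrix
open scoped BigOperators ENNReal

noncomputable section

/-- The `W×W` unitary discrete Fourier transform matrix,
`F_{n,ω} = W^{-1/2}·exp(-2πi·n·ω/W)`. -/
def dftMatrix (W : ℕ) : Matrix (Fin W) (Fin W) ℂ := fun n w =>
  (Real.sqrt W : ℂ)⁻¹ *
    Complex.exp (-2 * Real.pi * Complex.I * (n.val : ℂ) * (w.val : ℂ) / (W : ℂ))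

/-- The `R×W` accumulate-and-dump sampling matrix `H`:
`H_{r,j} = 1` iff `r·(W/R) ≤ j < (r+1)·(W/R)`. -/
def sampMatrix (W R : ℕ) : Matrix (Fin R) (Fin W) ℂ := fun r j =>
  if r.val * (W / R) ≤ j.val ∧ j.val < (r.val + 1) * (W / R) then 1 else 0

/-- The random demodulator matrix `Φ = H·D·F` for the sign sequence `ε`. -/
def demodMatrix (W R : ℕ) (ε : Fin W → ℝ) : Matrix (Fin R) (Fin W) ℂ :=
  sampMatrix W R * Matrix.diagonal (fun j => (ε j : ℂ)) * dftMatrix W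

/-- Spectral (`ℓ2 → ℓ2` operator) norm of a complex matrix. -/
def specNorm {m n : Type} [Fintype m] [Fintype n] [DecidableEq n]
    (A : Matrix m n ℂ) : ℝ :=
  ‖LinearMap.toContinuousLinearMap (Matrix.toEuclideanLin A)‖

/-- Frobenius norm of a complex matrix. -/
def frobNorm {m n : Type} [Fintype m] [Fintype n] (A : Matrix m n ℂ) : ℝ :=
  Real.sqrt (∑ i, ∑ j, ‖A i j‖ ^ 2)

/-- ℓ1 norm of a complex vector. -/
def l1norm {n : Type} [Fintype n] (v : n → ℂ) : ℝ := ∑ i, ‖v i‖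

/-- ℓ2 norm of a complex vector. -/
def l2norm {n : Type} [Fintype n] (v : n → ℂ) : ℝ :=
  Real.sqrt (∑ i, ‖v i‖ ^ 2)

/-- `ε` is a family of `W` independent Rademacher random variables on `(Ωp, μ)`:
each coordinate is measurable, takes only the values `±1`, takes each value with
probability `1/2`, and the coordinates are jointly independent. -/
def IsRademacherFamily {Ωp : Type} [MeasurableSpace Ωp] (μ : Measure Ωp) {W : ℕ}
    (ε : Ωp → Fin W → ℝ) : Prop :=
  (∀ j, Measurable (fun x => ε x j)) ∧
  (∀ x j, ε x j = 1 ∨ ε x j = -1) ∧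
  (∀ j, μ {x | ε x j = 1} = 1 / 2) ∧
  iIndepFun (fun j x => ε x j) μ

section RademacherHelpers

variable {Ωp : Type} [MeasurableSpace Ωp] {μ : Measure Ωp} [IsProbabilityMeasure μ]
variable {W : ℕ} {ε : Ωp → Fin W → ℝ}

lemma rad_integrable (hrad : IsRademacherFamily μ ε) (c : Fin W → ℝ) (t : ℝ) (j : Fin W) :
    Integrable (fun x => Real.exp (t * (c j * ε x j))) μ := by
  have hmeas : Measurable fun x => Real.exp (t * (c j * ε x j)) :=
    (((hrad.1 j).const_mul (c j)).const_mul t).exp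
  refine (integrable_const (Real.exp |t * c j|)).mono' hmeas.aestronglyMeasurable ?_
  filter_upwards with x
  have hε : |ε x j| = 1 := by rcases hrad.2.1 x j with h | h <;> simp [h]
  have habs : |t * (c j * ε x j)| = |t * c j| := by
    rw [show t * (c j * ε x j) = t * c j * ε x j by ring, abs_mul, hε, mul_one]
  rw [Real.norm_eq_abs, abs_of_pos (Real.exp_pos _)]
  exact Real.exp_le_exp.2 (habs ▸ le_abs_self _)

lemma rad_mgf_single (hrad : IsRademacherFamily μ ε) (c : Fin W → ℝ) (t : ℝ) (j : Fin W) :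
    mgf (fun x => c j * ε x j) μ t ≤ Real.exp (t ^ 2 * c j ^ 2 / 2) := by
  set A : Set Ωp := {x | ε x j = 1} with hA_def
  have hA : MeasurableSet A := (hrad.1 j) (measurableSet_singleton 1)
  have hfun : (fun x => Real.exp (t * (c j * ε x j))) =
      fun x => A.indicator (fun _ => Real.exp (t * c j)) x
        + Aᶜ.indicator (fun _ => Real.exp (-(t * c j))) x := by
    funext x
    by_cases h : ε x j = 1
    · have hx : x ∈ A := h
      have hx' : x ∉ Aᶜ := by simp [hx]
      simp [Set.indicator_of_mem hx, Set.indicator_of_notMem hx', h, mul_comm]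
    · have h2 : ε x j = -1 := (hrad.2.1 x j).resolve_left h
      have hx : x ∉ A := h
      have hx' : x ∈ Aᶜ := by simp [hx]
      simp only [Set.indicator_of_notMem hx, Set.indicator_of_mem hx', h2, zero_add]
      ring_nf
  have hμA : μ A = 1 / 2 := hrad.2.2.1 j
  have hμAc : μ Aᶜ = 1 / 2 := by
    rw [measure_compl hA (measure_ne_top μ A), hμA, measure_univ]
    simpa using ENNReal.sub_half (a := 1) one_ne_top
  have hintegral : mgf (fun x => c j * ε x j) μ t
      = (μ A).toReal * Real.exp (t * c j) + (μ Aᶜ).toReal * Real.exp (-(t * c j)) := by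
    rw [mgf, hfun, integral_add ((integrable_const _).indicator hA)
      ((integrable_const _).indicator hA.compl),
      integral_indicator_const _ hA, integral_indicator_const _ hA.compl,
      smul_eq_mul, smul_eq_mul, measureReal_def, measureReal_def]
  have htoReal : ((1 : ℝ≥0∞) / 2).toReal = 1 / 2 := by simp
  rw [hintegral, hμA, hμAc, htoReal]
  have hcosh : (1 : ℝ) / 2 * Real.exp (t * c j) + 1 / 2 * Real.exp (-(t * c j))
      = Real.cosh (t * c j) := by
    rw [Real.cosh_eq]; ring
  rw [hcosh]
  calc Real.cosh (t * c j) ≤ Real.exp ((t * c j) ^ 2 / 2) := Real.cosh_le_exp_half_sq _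
    _ = Real.exp (t ^ 2 * c j ^ 2 / 2) := by ring_nf

lemma rad_sum_eq (c : Fin W → ℝ) :
    (fun x => ∑ j, c j * ε x j) = ∑ j : Fin W, (fun x => c j * ε x j) := by
  funext x; simp [Finset.sum_apply]

lemma rad_indep (hrad : IsRademacherFamily μ ε) (c : Fin W → ℝ) :
    iIndepFun (fun j x => c j * ε x j) μ :=
  hrad.2.2.2.comp (fun j y => c j * y) (fun j => measurable_const.mul measurable_id)

lemma rad_mgf_sum (hrad : IsRademacherFamily μ ε) (c : Fin W → ℝ) (t : ℝ) :
    mgf (fun x => ∑ j, c j * ε x j) μ t ≤ Real.exp (t ^ 2 * (∑ j, c j ^ 2) / 2) := by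
  have hY : ∀ j : Fin W, Measurable fun x => c j * ε x j :=
    fun j => (hrad.1 j).const_mul _
  rw [rad_sum_eq, (rad_indep hrad c).mgf_sum hY Finset.univ]
  calc ∏ j, mgf (fun x => c j * ε x j) μ t
      ≤ ∏ j, Real.exp (t ^ 2 * c j ^ 2 / 2) :=
        Finset.prod_le_prod (fun j _ => mgf_nonneg) (fun j _ => rad_mgf_single hrad c t j)
    _ = Real.exp (∑ j, t ^ 2 * c j ^ 2 / 2) := by rw [Real.exp_sum]
    _ = Real.exp (t ^ 2 * (∑ j, c j ^ 2) / 2) := by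
        rw [← Finset.sum_div, ← Finset.mul_sum]

lemma rad_integrable_sum (hrad : IsRademacherFamily μ ε) (c : Fin W → ℝ) (t : ℝ) :
    Integrable (fun x => Real.exp (t * (∑ j, c j * ε x j))) μ := by
  have hY : ∀ j : Fin W, Measurable fun x => c j * ε x j :=
    fun j => (hrad.1 j).const_mul _
  have := (rad_indep hrad c).integrable_exp_mul_sum (t := t) hY (s := Finset.univ)
    (fun j _ => rad_integrable hrad c t j)
  simpa [Finset.sum_apply] using this

lemma rad_oneside (hrad : IsRademacherFamily μ ε) (c : Fin W → ℝ) (u : ℝ)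
    (hu : 0 ≤ u) (hσ : 0 < ∑ j, c j ^ 2) :
    (μ {x | u ≤ ∑ j, c j * ε x j}).toReal ≤ Real.exp (-u ^ 2 / (2 * ∑ j, c j ^ 2)) := by
  set σ2 := ∑ j, c j ^ 2 with hσ2
  set t := u / σ2 with ht_def
  have ht : 0 ≤ t := div_nonneg hu hσ.le
  calc (μ {x | u ≤ ∑ j, c j * ε x j}).toReal
      ≤ Real.exp (-t * u) * mgf (fun x => ∑ j, c j * ε x j) μ t :=
        measure_ge_le_exp_mul_mgf u ht (rad_integrable_sum hrad c t)
    _ ≤ Real.exp (-t * u) * Real.exp (t ^ 2 * σ2 / 2) := by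
        exact mul_le_mul_of_nonneg_left (rad_mgf_sum hrad c t) (Real.exp_pos _).le
    _ = Real.exp (-t * u + t ^ 2 * σ2 / 2) := by rw [← Real.exp_add]
    _ = Real.exp (-u ^ 2 / (2 * σ2)) := by
        congr 1
        rw [ht_def]
        field_simp
        ring

lemma rad_abs_tail (hrad : IsRademacherFamily μ ε) (c : Fin W → ℝ) (K : ℝ) (hK : 0 < K) :
    μ {x | Real.sqrt (2 * K * ∑ j, c j ^ 2) < |∑ j, c j * ε x j|}
      ≤ ENNReal.ofReal (2 * Real.exp (-K)) := by
  have hσ2 : 0 ≤ ∑ j, c j ^ 2 := Finset.sum_nonneg fun j _ => sq_nonneg _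
  rcases hσ2.lt_or_eq with hσ | hσ
  · set σ2 := ∑ j, c j ^ 2 with hσ2_def
    set u := Real.sqrt (2 * K * σ2) with hu_def
    have hu : 0 ≤ u := Real.sqrt_nonneg _
    have hu2 : u ^ 2 = 2 * K * σ2 := Real.sq_sqrt (by positivity)
    have hexp : -u ^ 2 / (2 * σ2) = -K := by
      rw [hu2]; field_simp
    have hsub : {x | u < |∑ j, c j * ε x j|}
        ⊆ {x | u ≤ ∑ j, c j * ε x j} ∪ {x | u ≤ ∑ j, (-c j) * ε x j} := by
      intro x hx
      simp only [Set.mem_setOf_eq] at hx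
      rcases lt_abs.mp hx with h | h
      · exact Or.inl h.le
      · refine Or.inr ?_
        simp only [Set.mem_setOf_eq, neg_mul, Finset.sum_neg_distrib]
        exact h.le
    have h1 : μ {x | u ≤ ∑ j, c j * ε x j} ≤ ENNReal.ofReal (Real.exp (-K)) := by
      rw [← ENNReal.ofReal_toReal (measure_ne_top μ _)]
      exact ENNReal.ofReal_le_ofReal (hexp ▸ rad_oneside hrad c u hu hσ)
    have h2 : μ {x | u ≤ ∑ j, (-c j) * ε x j} ≤ ENNReal.ofReal (Real.exp (-K)) := by
      have hσ' : 0 < ∑ j, (-c j) ^ 2 := by simpa [neg_sq] using hσ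
      have hexp' : -u ^ 2 / (2 * ∑ j, (-c j) ^ 2) = -K := by
        simpa [neg_sq] using hexp
      rw [← ENNReal.ofReal_toReal (measure_ne_top μ _)]
      exact ENNReal.ofReal_le_ofReal
        (hexp' ▸ rad_oneside hrad (fun j => -c j) u hu hσ')
    calc μ {x | u < |∑ j, c j * ε x j|}
        ≤ μ ({x | u ≤ ∑ j, c j * ε x j} ∪ {x | u ≤ ∑ j, (-c j) * ε x j}) :=
          measure_mono hsub
      _ ≤ μ {x | u ≤ ∑ j, c j * ε x j} + μ {x | u ≤ ∑ j, (-c j) * ε x j} :=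
          measure_union_le _ _
      _ ≤ ENNReal.ofReal (Real.exp (-K)) + ENNReal.ofReal (Real.exp (-K)) := add_le_add h1 h2
      _ = ENNReal.ofReal (2 * Real.exp (-K)) := by
          rw [← ENNReal.ofReal_add (Real.exp_pos _).le (Real.exp_pos _).le]; ring_nf
  · have hc : ∀ j, c j = 0 := by
      intro j
      have := (Finset.sum_eq_zero_iff_of_nonneg (fun j _ => sq_nonneg (c j))).mp hσ.symm
      exact (pow_eq_zero_iff two_ne_zero).mp (this j (Finset.mem_univ j))
    have hempty : {x : Ωp | Real.sqrt (2 * K * ∑ j, c j ^ 2) < |∑ j, c j * ε x j|} = ∅ := by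
      ext x; simp [hc]
    rw [hempty]
    simp

end RademacherHelpers

lemma demod_entry (W R : ℕ) (e : Fin W → ℝ) (r : Fin R) (w : Fin W) :
    demodMatrix W R e r w = ∑ j, (e j : ℂ) * (sampMatrix W R r j * dftMatrix W j w) := by
  rw [demodMatrix, Matrix.mul_apply]
  refine Finset.sum_congr rfl fun j _ => ?_
  rw [Matrix.mul_diagonal]
  ring

lemma sum_normSq (W R : ℕ) (hR : 0 < R) (hdvd : R ∣ W) (hW : 0 < W) (r : Fin R) (w : Fin W) :
    ∑ j, ‖sampMatrix W R r j * dftMatrix W j w‖ ^ 2 = 1 / (R : ℝ) := by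
  set q := W / R with hq
  have hqR : q * R = W := Nat.div_mul_cancel hdvd
  have habs_dft : ∀ j : Fin W, ‖dftMatrix W j w‖ ^ 2 = ((W : ℝ))⁻¹ := by
    intro j
    have hz : (-2 * (Real.pi : ℂ) * Complex.I * (j.val : ℂ) * (w.val : ℂ) / (W : ℂ))
        = ((-2 * Real.pi * j.val * w.val / W : ℝ) : ℂ) * Complex.I := by push_cast; ring
    rw [dftMatrix]
    rw [norm_mul, norm_inv, hz, Complex.norm_exp]
    have hre : (((-2 * Real.pi * j.val * w.val / W : ℝ) : ℂ) * Complex.I).re = 0 := by simp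
    rw [hre, Real.exp_zero, mul_one, Complex.norm_real, Real.norm_eq_abs,
      abs_of_nonneg (Real.sqrt_nonneg _), inv_pow, Real.sq_sqrt (Nat.cast_nonneg W)]
  have hterm : ∀ j : Fin W, ‖sampMatrix W R r j * dftMatrix W j w‖ ^ 2
      = (if r.val * q ≤ j.val ∧ j.val < (r.val + 1) * q then (1 : ℝ) else 0) * (W : ℝ)⁻¹ := by
    intro j
    rw [norm_mul, mul_pow, habs_dft]
    congr 1
    rw [sampMatrix]
    split_ifs <;> simp
  rw [Finset.sum_congr rfl fun j _ => hterm j, ← Finset.sum_mul]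
  have hcount : (∑ j : Fin W,
      if r.val * q ≤ j.val ∧ j.val < (r.val + 1) * q then (1 : ℝ) else 0) = q := by
    rw [Fin.sum_univ_eq_sum_range
      (fun j => if r.val * q ≤ j ∧ j < (r.val + 1) * q then (1 : ℝ) else 0) W,
      Finset.sum_boole]
    have hfil : (Finset.range W).filter (fun j => r.val * q ≤ j ∧ j < (r.val + 1) * q)
        = Finset.Ico (r.val * q) ((r.val + 1) * q) := by
      ext j
      simp only [Finset.mem_filter, Finset.mem_range, Finset.mem_Ico]
      constructor
      · rintro ⟨_, h⟩; exact h
      · rintro ⟨h1, h2⟩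
        refine ⟨lt_of_lt_of_le h2 ?_, h1, h2⟩
        calc (r.val + 1) * q ≤ R * q := Nat.mul_le_mul_right _ r.isLt
          _ = W := by rw [Nat.mul_comm]; exact hqR
    rw [hfil, Nat.card_Ico]
    have h1 : (r.val + 1) * q = r.val * q + q := by ring
    rw [h1, Nat.add_sub_cancel_left]
  rw [hcount]
  have hq0n : 0 < q := by
    rcases Nat.eq_zero_or_pos q with h | h
    · rw [h, zero_mul] at hqR; omega
    · exact h
  have hq0 : (0 : ℝ) < q := by exact_mod_cast hq0n
  have hWq : (W : ℝ) = q * R := by exact_mod_cast hqR.symm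
  rw [hWq, mul_inv, ← mul_assoc, mul_inv_cancel₀ hq0.ne', one_mul, inv_eq_one_div]

lemma entry_tail {Ωp : Type} [MeasurableSpace Ωp] {μ : Measure Ωp} [IsProbabilityMeasure μ]
    {W R : ℕ} {ε : Ωp → Fin W → ℝ} (hrad : IsRademacherFamily μ ε)
    (hR : 0 < R) (hdvd : R ∣ W) (hW : 2 ≤ W) (r : Fin R) (w : Fin W) :
    μ {x | Real.sqrt (10 * Real.log W / R) < ‖demodMatrix W R (ε x) r w‖}
      ≤ ENNReal.ofReal (4 * Real.exp (-(5 * Real.log W))) := by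
  have hlogW : 0 < Real.log W := Real.log_pos (by exact_mod_cast hW)
  set K : ℝ := 5 * Real.log W with hK_def
  have hK : 0 < K := by positivity
  set z : Fin W → ℂ := fun j => sampMatrix W R r j * dftMatrix W j w with hz
  set a : Fin W → ℝ := fun j => (z j).re with ha
  set b : Fin W → ℝ := fun j => (z j).im with hb
  have hW0 : 0 < W := by omega
  have hR0 : (0 : ℝ) < R := by exact_mod_cast hR
  have hab : (∑ j, a j ^ 2) + (∑ j, b j ^ 2) = 1 / (R : ℝ) := by
    rw [← Finset.sum_add_distrib, ← sum_normSq W R hR hdvd hW0 r w]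
    refine Finset.sum_congr rfl fun j _ => ?_
    rw [Complex.sq_norm, Complex.normSq_apply]; ring
  have hre : ∀ x, (demodMatrix W R (ε x) r w).re = ∑ j, a j * ε x j := by
    intro x
    rw [demod_entry, Complex.re_sum]
    exact Finset.sum_congr rfl fun j _ => by rw [Complex.re_ofReal_mul]; ring
  have him : ∀ x, (demodMatrix W R (ε x) r w).im = ∑ j, b j * ε x j := by
    intro x
    rw [demod_entry, Complex.im_sum]
    exact Finset.sum_congr rfl fun j _ => by rw [Complex.im_ofReal_mul]; ring
  have ht0_nonneg : 0 ≤ Real.sqrt (10 * Real.log W / R) := Real.sqrt_nonneg _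
  have ht0sq : Real.sqrt (10 * Real.log W / R) ^ 2 = 10 * Real.log W / R :=
    Real.sq_sqrt (by positivity)
  have hσa : 0 ≤ ∑ j, a j ^ 2 := Finset.sum_nonneg fun j _ => sq_nonneg _
  have hσb : 0 ≤ ∑ j, b j ^ 2 := Finset.sum_nonneg fun j _ => sq_nonneg _
  have hsub : {x | Real.sqrt (10 * Real.log W / R) < ‖demodMatrix W R (ε x) r w‖}
      ⊆ {x | Real.sqrt (2 * K * ∑ j, a j ^ 2) < |∑ j, a j * ε x j|}
        ∪ {x | Real.sqrt (2 * K * ∑ j, b j ^ 2) < |∑ j, b j * ε x j|} := by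
    intro x hx
    simp only [Set.mem_setOf_eq] at hx
    by_contra hcon
    simp only [Set.mem_union, Set.mem_setOf_eq, not_or, not_lt] at hcon
    obtain ⟨hA, hB⟩ := hcon
    have hphi2 : ‖demodMatrix W R (ε x) r w‖ ^ 2
        = (∑ j, a j * ε x j) ^ 2 + (∑ j, b j * ε x j) ^ 2 := by
      rw [Complex.sq_norm, Complex.normSq_apply, hre x, him x]; ring
    have h1 : (∑ j, a j * ε x j) ^ 2 ≤ 2 * K * ∑ j, a j ^ 2 := by
      calc (∑ j, a j * ε x j) ^ 2 = |∑ j, a j * ε x j| ^ 2 := (sq_abs _).symm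
        _ ≤ Real.sqrt (2 * K * ∑ j, a j ^ 2) ^ 2 := pow_le_pow_left₀ (abs_nonneg _) hA 2
        _ = 2 * K * ∑ j, a j ^ 2 := Real.sq_sqrt (by positivity)
    have h2 : (∑ j, b j * ε x j) ^ 2 ≤ 2 * K * ∑ j, b j ^ 2 := by
      calc (∑ j, b j * ε x j) ^ 2 = |∑ j, b j * ε x j| ^ 2 := (sq_abs _).symm
        _ ≤ Real.sqrt (2 * K * ∑ j, b j ^ 2) ^ 2 := pow_le_pow_left₀ (abs_nonneg _) hB 2
        _ = 2 * K * ∑ j, b j ^ 2 := Real.sq_sqrt (by positivity)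
    have hlt : Real.sqrt (10 * Real.log W / R) ^ 2
        < ‖demodMatrix W R (ε x) r w‖ ^ 2 :=
      pow_lt_pow_left₀ hx ht0_nonneg two_ne_zero
    rw [hphi2, ht0sq] at hlt
    have hKsum : 2 * K * (∑ j, a j ^ 2) + 2 * K * (∑ j, b j ^ 2)
        = 10 * Real.log W / R := by
      rw [← mul_add, hab, hK_def]; field_simp; ring
    linarith
  calc μ {x | Real.sqrt (10 * Real.log W / R) < ‖demodMatrix W R (ε x) r w‖}
      ≤ μ ({x | Real.sqrt (2 * K * ∑ j, a j ^ 2) < |∑ j, a j * ε x j|}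
        ∪ {x | Real.sqrt (2 * K * ∑ j, b j ^ 2) < |∑ j, b j * ε x j|}) := measure_mono hsub
    _ ≤ μ {x | Real.sqrt (2 * K * ∑ j, a j ^ 2) < |∑ j, a j * ε x j|}
        + μ {x | Real.sqrt (2 * K * ∑ j, b j ^ 2) < |∑ j, b j * ε x j|} :=
          measure_union_le _ _
    _ ≤ ENNReal.ofReal (2 * Real.exp (-K)) + ENNReal.ofReal (2 * Real.exp (-K)) :=
          add_le_add (rad_abs_tail hrad a K hK) (rad_abs_tail hrad b K hK)
    _ = ENNReal.ofReal (4 * Real.exp (-(5 * Real.log W))) := by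
          rw [← ENNReal.ofReal_add (by positivity) (by positivity), hK_def]; ring_nf

/-- Tail bound for the maximum entry of the random demodulator matrix:
`P(max_{r,ω} |Φ_{r,ω}| > √(10·log W / R)) ≤ 1/W`. -/
theorem max_entry_tail_bound (W R : ℕ) (hR : 0 < R) (hdvd : R ∣ W) (hW : 2 ≤ W)
    {Ωp : Type} [MeasurableSpace Ωp] (μ : Measure Ωp) [IsProbabilityMeasure μ]
    (ε : Ωp → Fin W → ℝ) (hrad : IsRademacherFamily μ ε) :
    μ {x | Real.sqrt (10 * Real.log W / R) <
        ⨆ r : Fin R, ⨆ w : Fin W, ‖demodMatrix W R (ε x) r w‖}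
      ≤ (W : ℝ≥0∞)⁻¹ := by
  have hW0 : 0 < W := by omega
  haveI : Nonempty (Fin R) := ⟨⟨0, hR⟩⟩
  haveI : Nonempty (Fin W) := ⟨⟨0, hW0⟩⟩
  have hsub : {x | Real.sqrt (10 * Real.log W / R) <
        ⨆ r : Fin R, ⨆ w : Fin W, ‖demodMatrix W R (ε x) r w‖}
      ⊆ ⋃ r : Fin R, ⋃ w : Fin W,
        {x | Real.sqrt (10 * Real.log W / R) < ‖demodMatrix W R (ε x) r w‖} := by
    intro x hx
    simp only [Set.mem_setOf_eq] at hx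
    rw [lt_ciSup_iff (Set.Finite.bddAbove (Set.finite_range _))] at hx
    obtain ⟨r, hr⟩ := hx
    rw [lt_ciSup_iff (Set.Finite.bddAbove (Set.finite_range _))] at hr
    obtain ⟨w, hw⟩ := hr
    exact Set.mem_iUnion.mpr ⟨r, Set.mem_iUnion.mpr ⟨w, hw⟩⟩
  have hWR : (R : ℝ) ≤ W := by exact_mod_cast Nat.le_of_dvd hW0 hdvd
  have hW2 : (2 : ℝ) ≤ W := by exact_mod_cast hW
  have hWpos : (0 : ℝ) < W := by linarith
  have hbound : μ {x | Real.sqrt (10 * Real.log W / R) <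
        ⨆ r : Fin R, ⨆ w : Fin W, ‖demodMatrix W R (ε x) r w‖}
      ≤ (R : ℝ≥0∞) * ((W : ℝ≥0∞) * ENNReal.ofReal (4 * Real.exp (-(5 * Real.log W)))) := by
    calc μ {x | Real.sqrt (10 * Real.log W / R) <
          ⨆ r : Fin R, ⨆ w : Fin W, ‖demodMatrix W R (ε x) r w‖}
        ≤ μ (⋃ r : Fin R, ⋃ w : Fin W,
          {x | Real.sqrt (10 * Real.log W / R) < ‖demodMatrix W R (ε x) r w‖}) :=
          measure_mono hsub
      _ ≤ ∑' r : Fin R, μ (⋃ w : Fin W,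
          {x | Real.sqrt (10 * Real.log W / R) < ‖demodMatrix W R (ε x) r w‖}) :=
          measure_iUnion_le _
      _ ≤ ∑' r : Fin R, ∑' w : Fin W,
          μ {x | Real.sqrt (10 * Real.log W / R) < ‖demodMatrix W R (ε x) r w‖} :=
          ENNReal.tsum_le_tsum fun r => measure_iUnion_le _
      _ ≤ ∑' _r : Fin R, ∑' _w : Fin W, ENNReal.ofReal (4 * Real.exp (-(5 * Real.log W))) :=
          ENNReal.tsum_le_tsum fun r => ENNReal.tsum_le_tsum fun w =>
            entry_tail hrad hR hdvd hW r w
      _ = (R : ℝ≥0∞) * ((W : ℝ≥0∞) * ENNReal.ofReal (4 * Real.exp (-(5 * Real.log W)))) := by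
          simp [tsum_fintype, Finset.sum_const, nsmul_eq_mul, Finset.card_univ]
  refine hbound.trans ?_
  have hexp : Real.exp (-(5 * Real.log W)) = ((W : ℝ) ^ (5 : ℕ))⁻¹ := by
    rw [Real.exp_neg]
    congr 1
    rw [show (5 : ℝ) * Real.log W = ((5 : ℕ) : ℝ) * Real.log W by norm_num,
      Real.exp_nat_mul, Real.exp_log hWpos]
  have hreal : (R : ℝ) * ((W : ℝ) * (4 * ((W : ℝ) ^ (5 : ℕ))⁻¹)) ≤ (W : ℝ)⁻¹ := by
    rw [show (R : ℝ) * ((W : ℝ) * (4 * ((W : ℝ) ^ (5 : ℕ))⁻¹))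
        = 4 * R * W / (W ^ (5 : ℕ)) from by ring,
      inv_eq_one_div, div_le_div_iff₀ (by positivity) hWpos]
    have h4 : (4 : ℝ) ≤ (W : ℝ) ^ 2 := by nlinarith [hW2]
    nlinarith [mul_le_mul_of_nonneg_right h4 (show (0:ℝ) ≤ (R:ℝ)*W*W by positivity),
      mul_le_mul_of_nonneg_right hWR (show (0:ℝ) ≤ (W:ℝ)^4 by positivity)]
  calc (R : ℝ≥0∞) * ((W : ℝ≥0∞) * ENNReal.ofReal (4 * Real.exp (-(5 * Real.log W))))
      ≤ ENNReal.ofReal ((W : ℝ)⁻¹) := by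
        rw [← ENNReal.ofReal_natCast R, ← ENNReal.ofReal_natCast W,
          ← ENNReal.ofReal_mul (by positivity : (0:ℝ) ≤ (W:ℝ)),
          ← ENNReal.ofReal_mul (by positivity : (0:ℝ) ≤ (R:ℝ))]
        apply ENNReal.ofReal_le_ofReal
        rw [hexp]
        exact hreal
    _ = (W : ℝ≥0∞)⁻¹ := by
        rw [ENNReal.ofReal_inv_of_pos hWpos, ENNReal.ofReal_natCast]
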